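/- Let J_{12}, J_{23}, J_{31} be defined by J_{ℓm} = -tan(φ_ℓ - φ_m)·tan(φ_k) for each cyclic permutation (k,ℓ,m) of (1,2,3), where φ_1, φ_2, φ_3 are real numbers such that all the tangents involved are defined. Then J_{12} + J_{23} + J_{31} + J_{12}·J_{23}·J_{31} = 0. -/

import Mathlib

theorem J_sum_identity (φ₁ φ₂ φ₃ : ℝ)
    (h₁ : Real.cos φ₁ ≠ 0) (h₂ : Real.cos φ₂ ≠ 0) (h₃ : Real.cos φ₃ ≠ 0)
    (h₁₂ : Real.cos (φ₁ - φ₂) ≠ 0) (h₂₃ : Real.cos (φ₂ - φ₃) ≠ 0)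
    (h₃₁ : Real.cos (φ₃ - φ₁) ≠ 0) :
    let J₁₂ := -Real.tan (φ₁ - φ₂) * Real.tan φ₃
    let J₂₃ := -Real.tan (φ₂ - φ₃) * Real.tan φ₁
    let J₃₁ := -Real.tan (φ₃ - φ₁) * Real.tan φ₂
    J₁₂ + J₂₃ + J₃₁ + J₁₂ * J₂₃ * J₃₁ = 0 := by
  simp only [Real.tan_eq_sin_div_cos]
  rw [Real.sin_sub φ₁ φ₂, Real.sin_sub φ₂ φ₃, Real.sin_sub φ₃ φ₁,
      Real.cos_sub φ₁ φ₂, Real.cos_sub φ₂ φ₃, Real.cos_sub φ₃ φ₁] at *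
  have hA : Real.cos φ₂ * Real.cos φ₁ + Real.sin φ₁ * Real.sin φ₂ ≠ 0 := by rwa [mul_comm (Real.cos φ₂)]
  have hB : Real.cos φ₁ * Real.cos φ₃ + Real.sin φ₁ * Real.sin φ₃ ≠ 0 := by rwa [mul_comm (Real.cos φ₁), mul_comm (Real.sin φ₁)]
  field_simp
  ring
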